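/- Let F, F' : SVect^n → SVect^m be ℂ-linear functors with rank matrices R and R'. The map sending a natural transformation τ : F ⟹ F' to its matrix T(τ), where T(τ)_{ij} is the matrix of the i-th component of τ_{ℂ(j,n)}, is a bijection from Nat(F,F') onto the set of m×n matrices whose (i,j)-entry is an arbitrary R'_{ij} × R_{ij} complex matrix. -/
import Mathlib


open CategoryTheory Matrix
open scoped BigOperators

/-- The skeletal category `SVect^n`: objects are `n`-tuples of natural numbers
(representing `(ℂ^{a₁},…,ℂ^{a_n})`), morphisms are tuples of complex matrices. -/
def SVectn (n : ℕ) : Type := Fin n → ℕ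

namespace SVectn

noncomputable instance (n : ℕ) : Category (SVectn n) where
  Hom a b := ∀ j, Matrix (Fin (b j)) (Fin (a j)) ℂ
  id _ := fun _ => 1
  comp f g := fun j => g j * f j
  id_comp f := by funext j; exact Matrix.mul_one _
  comp_id f := by funext j; exact Matrix.one_mul _
  assoc f g h := by funext j; exact (Matrix.mul_assoc _ _ _).symm

noncomputable instance (n : ℕ) : Preadditive (SVectn n) where
  homGroup a b := inferInstanceAs (AddCommGroup (∀ j, Matrix (Fin (b j)) (Fin (a j)) ℂ))
  add_comp a b c f f' g := by funext j; exact Matrix.mul_add _ _ _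
  comp_add a b c f g g' := by funext j; exact Matrix.add_mul _ _ _

noncomputable instance (n : ℕ) : CategoryTheory.Linear ℂ (SVectn n) where
  homModule a b := inferInstanceAs (Module ℂ (∀ j, Matrix (Fin (b j)) (Fin (a j)) ℂ))
  smul_comp a b c s f g := by
    funext j
    show g j * (s • f j) = s • (g j * f j)
    exact Matrix.mul_smul _ _ _
  comp_smul a b c f s g := by
    funext j
    show (s • g j) * f j = s • (g j * f j)
    exact Matrix.smul_mul _ _ _

end SVectn

/-- The object `ℂ(j,n) = (0,…,ℂ,…,0)` of `SVect^n`, with `ℂ` in position `j`. -/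
def unitObj (n : ℕ) (j : Fin n) : SVectn n := fun j' => if j' = j then 1 else 0

namespace SVectn

variable {n : ℕ}

@[simp] lemma comp_def {a b c : SVectn n} (f : a ⟶ b) (g : b ⟶ c) (j : Fin n) :
    (f ≫ g) j = g j * f j := rfl

@[simp] lemma id_def (a : SVectn n) (j : Fin n) : (𝟙 a : a ⟶ a) j = 1 := rfl

lemma hom_sum_apply {a b : SVectn n} {γ : Type*} (s : Finset γ) (f : γ → (a ⟶ b)) (j : Fin n) :
    (∑ i ∈ s, f i) j = ∑ i ∈ s, f i j :=
  Finset.sum_apply j s f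

lemma hom_smul_apply {a b : SVectn n} (c : ℂ) (f : a ⟶ b) (j : Fin n) :
    (c • f) j = c • f j := rfl

noncomputable def incl (a : SVectn n) (j : Fin n) (k : Fin (a j)) : unitObj n j ⟶ a :=
  fun j' => Matrix.of fun r _ => if j' = j ∧ (r : ℕ) = (k : ℕ) then 1 else 0

noncomputable def proj (a : SVectn n) (j : Fin n) (k : Fin (a j)) : a ⟶ unitObj n j :=
  fun j' => Matrix.of fun _ c => if j' = j ∧ (c : ℕ) = (k : ℕ) then 1 else 0

lemma sum_proj_incl (a : SVectn n) :
    ∑ j : Fin n, ∑ k : Fin (a j), proj a j k ≫ incl a j k = 𝟙 a := by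
  funext j'
  simp only [hom_sum_apply, id_def, comp_def]
  funext r c
  simp only [Matrix.sum_apply, Matrix.mul_apply, incl, proj, Matrix.of_apply]
  rw [Finset.sum_eq_single j']
  · have h1 : unitObj n j' j' = 1 := by simp [unitObj]
    simp only [true_and]
    simp only [Finset.sum_const, Finset.card_univ, Fintype.card_fin, h1, one_smul]
    simp [Matrix.one_apply, Fin.val_inj, ite_mul, one_mul, zero_mul, eq_comm, Finset.sum_ite_eq]
  · intro j _ hj
    apply Finset.sum_eq_zero
    intro k _
    apply Finset.sum_eq_zero
    intro s _
    rw [if_neg (fun h => hj h.1.symm), zero_mul]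
  · simp


lemma incl_comp {a b : SVectn n} (f : a ⟶ b) (j : Fin n) (k : Fin (a j)) :
    incl a j k ≫ f = ∑ l : Fin (b j), f j l k • incl b j l := by
  funext j'
  funext r c
  simp only [hom_sum_apply, comp_def, Matrix.sum_apply, Matrix.mul_apply, incl,
    Matrix.of_apply, hom_smul_apply, Matrix.smul_apply, smul_eq_mul]
  by_cases h : j' = j
  · subst h
    simp [Fin.val_inj, eq_comm, mul_ite, ite_mul]
  · simp [h]

lemma comp_proj {a b : SVectn n} (f : a ⟶ b) (j : Fin n) (l : Fin (b j)) :
    f ≫ proj b j l = ∑ k : Fin (a j), f j l k • proj a j k := by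
  funext j'
  funext r c
  simp only [hom_sum_apply, comp_def, Matrix.sum_apply, Matrix.mul_apply, proj,
    Matrix.of_apply, hom_smul_apply, Matrix.smul_apply, smul_eq_mul]
  by_cases h : j' = j
  · subst h
    simp [Fin.val_inj, eq_comm, mul_ite, ite_mul]
  · simp [h]

lemma incl_unit (j : Fin n) (k : Fin (unitObj n j j)) :
    incl (unitObj n j) j k = 𝟙 (unitObj n j) := by
  funext j'
  funext r c
  by_cases h : j' = j
  · subst h
    have h1 : unitObj n j' j' = 1 := by simp [unitObj]
    have hr : (r : ℕ) = 0 := by have := r.isLt; omega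
    have hk : (k : ℕ) = 0 := by have := k.isLt; omega
    have hc : (c : ℕ) = 0 := by have := c.isLt; omega
    simp only [incl, Matrix.of_apply, id_def, Matrix.one_apply]
    rw [if_pos ⟨trivial, by omega⟩, if_pos (Fin.ext (by omega : (r : ℕ) = (c : ℕ)))]
  · exact absurd r.isLt (by simp [unitObj, h])

lemma proj_unit (j : Fin n) (k : Fin (unitObj n j j)) :
    proj (unitObj n j) j k = 𝟙 (unitObj n j) := by
  funext j'
  funext r c
  by_cases h : j' = j
  · subst h
    have h1 : unitObj n j' j' = 1 := by simp [unitObj]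
    have hr : (r : ℕ) = 0 := by have := r.isLt; omega
    have hk : (k : ℕ) = 0 := by have := k.isLt; omega
    have hc : (c : ℕ) = 0 := by have := c.isLt; omega
    simp only [proj, Matrix.of_apply, id_def, Matrix.one_apply]
    rw [if_pos ⟨trivial, by omega⟩, if_pos (Fin.ext (by omega : (r : ℕ) = (c : ℕ)))]
  · exact absurd r.isLt (by simp [unitObj, h])

lemma app_eq {m : ℕ} {F F' : SVectn n ⥤ SVectn m} [F.Additive] [F'.Additive]
    (τ : F ⟶ F') (a : SVectn n) :
    τ.app a = ∑ j : Fin n, ∑ k : Fin (a j),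
      F.map (proj a j k) ≫ τ.app (unitObj n j) ≫ F'.map (incl a j k) := by
  conv_lhs => rw [← Category.id_comp (τ.app a), ← F.map_id, ← sum_proj_incl a]
  simp only [Functor.map_sum, Functor.map_comp, Preadditive.sum_comp, Category.assoc,
    NatTrans.naturality]

end SVectn

open SVectn

/-- for ℂ-linear functors `F, F' : SVect^n ⥤ SVect^m` with rank matrices
`R, R'`, the map sending a natural transformation `τ : F ⟹ F'` to the matrix
`T(τ)_{ij}` = (`i`-th component of `τ_{ℂ(j,n)}`) is a bijection onto the set of `m×n`
matrices whose `(i,j)`-entry is an arbitrary `R'_{ij} × R_{ij}` complex matrix. -/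
theorem stmt14 {n m : ℕ} (F F' : SVectn n ⥤ SVectn m)
    [F.Additive] [F.Linear ℂ] [F'.Additive] [F'.Linear ℂ] :
    Function.Bijective
      (fun (τ : F ⟶ F') (i : Fin m) (j : Fin n) =>
        (τ.app (unitObj n j) i :
          Matrix (Fin (F'.obj (unitObj n j) i)) (Fin (F.obj (unitObj n j) i)) ℂ)) := by
  constructor
  · intro τ τ' h
    have hu : ∀ j, τ.app (unitObj n j) = τ'.app (unitObj n j) := fun j =>
      funext fun i => congrFun (congrFun h i) j
    apply NatTrans.ext
    funext a
    rw [app_eq, app_eq]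
    simp only [hu]
  · intro M
    set mid : ∀ j : Fin n, F.obj (unitObj n j) ⟶ F'.obj (unitObj n j) :=
      fun j i => M i j with hmid
    have L : ∀ {a b : SVectn n} (f : a ⟶ b) (j : Fin n) (l : Fin (b j)),
        F.map f ≫ F.map (proj b j l) ≫ mid j ≫ F'.map (incl b j l)
          = ∑ k : Fin (a j), f j l k •
              (F.map (proj a j k) ≫ mid j ≫ F'.map (incl b j l)) := by
      intro a b f j l
      rw [← Category.assoc, ← Functor.map_comp, comp_proj, Functor.map_sum,
        Preadditive.sum_comp]
      refine Finset.sum_congr rfl fun k _ => ?_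
      simp [Functor.map_smul, Linear.smul_comp, Category.assoc]
    have R : ∀ {a b : SVectn n} (f : a ⟶ b) (j : Fin n) (k : Fin (a j)),
        (F.map (proj a j k) ≫ mid j ≫ F'.map (incl a j k)) ≫ F'.map f
          = ∑ l : Fin (b j), f j l k •
              (F.map (proj a j k) ≫ mid j ≫ F'.map (incl b j l)) := by
      intro a b f j k
      rw [Category.assoc, Category.assoc, ← Functor.map_comp, incl_comp, Functor.map_sum,
        Preadditive.comp_sum, Preadditive.comp_sum]
      refine Finset.sum_congr rfl fun l _ => ?_
      simp [Functor.map_smul, Linear.comp_smul, Category.assoc]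
    let app : ∀ a : SVectn n, F.obj a ⟶ F'.obj a := fun a =>
      ∑ j : Fin n, ∑ k : Fin (a j), F.map (proj a j k) ≫ mid j ≫ F'.map (incl a j k)
    refine ⟨⟨app, ?_⟩, ?_⟩
    · intro a b f
      rw [Preadditive.comp_sum, Preadditive.sum_comp]
      refine Finset.sum_congr rfl fun j _ => ?_
      rw [Preadditive.comp_sum, Preadditive.sum_comp]
      simp only [L f, R f]
      exact Finset.sum_comm
    · funext i j₀
      have key : (∑ j : Fin n, ∑ k : Fin (unitObj n j₀ j),
          F.map (proj (unitObj n j₀) j k) ≫ mid j ≫ F'.map (incl (unitObj n j₀) j k))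
            = mid j₀ := by
        rw [Finset.sum_eq_single j₀]
        · simp only [proj_unit, incl_unit, Functor.map_id, Category.id_comp,
            Category.comp_id, Finset.sum_const, Finset.card_univ, Fintype.card_fin]
          rw [show unitObj n j₀ j₀ = 1 from by simp [unitObj], one_smul]
          simp
        · intro j _ hj
          exact Finset.sum_eq_zero fun k _ => absurd k.isLt (by simp [unitObj, hj])
        · simp
      exact congrFun key i
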